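/- arXiv:2602.10795 — 6 statements merged into one kernel-verified Lean document; each statement's English description precedes it below -/
import Mathlib

section
/- Let Γ be a d-dimensional grid graph on vertex set [n₁] × ... × [n_d], where two vertices are adjacent iff they differ in exactly one coordinate. Let σ be an orientation of the edges of Γ. Suppose (i) every induced subgrid (induced by a product N₁ × ... × N_d of nonempty subsets N_i ⊆ [n_i]) has at least one sink under σ, and (ii) σ restricted to every subcube (an induced subgrid with all |N_i| ≤ 2) is a unique sink orientation. Then σ is a unique sink orientation of Γ, i.e., every induced subgrid has exactly one sink. -/
/-- Two grid vertices are adjacent iff they differ in exactly one coordinate. -/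
def GridAdj {d : ℕ} {n : Fin d → ℕ} (u v : ∀ i, Fin (n i)) : Prop :=
  ∃ i, u i ≠ v i ∧ ∀ j, j ≠ i → u j = v j

/-- `v` is a sink of the induced subgrid on `N₁ × ⋯ × N_d` under orientation `orient`. -/
def IsSinkIn {d : ℕ} {n : Fin d → ℕ}
    (orient : (∀ i, Fin (n i)) → (∀ i, Fin (n i)) → Prop)
    (N : ∀ i, Set (Fin (n i))) (v : ∀ i, Fin (n i)) : Prop :=
  (∀ i, v i ∈ N i) ∧ ∀ w, (∀ i, w i ∈ N i) → GridAdj v w → ¬ orient v w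

/-- If every induced subgrid has a sink and every subcube has a unique sink,
then every induced subgrid has a unique sink. -/
theorem stmt0 {d : ℕ} {n : Fin d → ℕ}
    (orient : (∀ i, Fin (n i)) → (∀ i, Fin (n i)) → Prop)
    (horient : ∀ u v, GridAdj u v → (orient u v ↔ ¬ orient v u))
    (hsink : ∀ N : ∀ i, Set (Fin (n i)), (∀ i, (N i).Nonempty) →
      ∃ v, IsSinkIn orient N v)
    (hcube : ∀ N : ∀ i, Set (Fin (n i)), (∀ i, (N i).Nonempty) →
      (∀ i, (N i).encard ≤ 2) → ∃! v, IsSinkIn orient N v) :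
    ∀ N : ∀ i, Set (Fin (n i)), (∀ i, (N i).Nonempty) →
      ∃! v, IsSinkIn orient N v := by
  intro N hN
  obtain ⟨v, hv⟩ := hsink N hN
  refine ⟨v, hv, ?_⟩
  intro u hu
  -- the subcube spanned by u and v
  set M : ∀ i, Set (Fin (n i)) := fun i => {u i, v i} with hM
  have hMne : ∀ i, (M i).Nonempty := fun i => ⟨u i, Or.inl rfl⟩
  have hMcard : ∀ i, (M i).encard ≤ 2 := by
    intro i
    calc (M i).encard ≤ ({u i} : Set (Fin (n i))).encard + ({v i} : Set _).encard :=
          Set.encard_union_le _ _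
      _ ≤ 2 := by simp [Set.encard_singleton]; rfl
  have hMsub : ∀ i, M i ⊆ N i := by
    intro i x hx
    rcases hx with h | h <;> subst h
    · exact hu.1 i
    · exact hv.1 i
  obtain ⟨w, hw, hwuniq⟩ := hcube M hMne hMcard
  have hsinkM : ∀ x, IsSinkIn orient N x → (∀ i, x i ∈ M i) → IsSinkIn orient M x := by
    intro x hx hxM
    exact ⟨hxM, fun y hy hadj => hx.2 y (fun i => hMsub i (hy i)) hadj⟩
  have h1 : u = w := hwuniq u (hsinkM u hu (fun i => Or.inl rfl))
  have h2 : v = w := hwuniq v (hsinkM v hv (fun i => Or.inr rfl))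
  rw [h1, h2]
end

section
/- Let σ be a unique sink orientation of the d-dimensional grid graph on [n₁] × ... × [n_d]. Define the outmap r that assigns to each vertex v the tuple (a₁, ..., a_d), where a_i is the number of outgoing edges of v in dimension i (i.e., the number of vertices w adjacent to v differing from v only in coordinate i such that the edge vw is oriented from v to w). Then r is a bijection from [n₁] × ... × [n_d] to {0, ..., n₁−1} × ... × {0, ..., n_d−1}. -/
/-- The outmap: the number of outgoing edges of `v` in dimension `i`. -/
noncomputable def outmapCount {d : ℕ} {n : Fin d → ℕ}
    (orient : (∀ i, Fin (n i)) → (∀ i, Fin (n i)) → Prop)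
    (v : ∀ i, Fin (n i)) (i : Fin d) : ℕ :=
  {x : Fin (n i) | x ≠ v i ∧ orient v (Function.update v i x)}.ncard

namespace StmtAux

open Finset

attribute [local instance] Classical.propDecidable

variable {d : ℕ} {n : Fin d → ℕ}

/-- The set of "non-outgoing" other values in coordinate `i`. -/
noncomputable def inF (orient : (∀ i, Fin (n i)) → (∀ i, Fin (n i)) → Prop)
    (v : ∀ i, Fin (n i)) (i : Fin d) : Finset (Fin (n i)) :=
  Finset.univ.filter fun x => x ≠ v i ∧ ¬ orient v (Function.update v i x)

/-- The set of outgoing other values in coordinate `i`. -/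
noncomputable def outF (orient : (∀ i, Fin (n i)) → (∀ i, Fin (n i)) → Prop)
    (v : ∀ i, Fin (n i)) (i : Fin d) : Finset (Fin (n i)) :=
  Finset.univ.filter fun x => x ≠ v i ∧ orient v (Function.update v i x)

lemma mem_inF {orient : (∀ i, Fin (n i)) → (∀ i, Fin (n i)) → Prop}
    {v : ∀ i, Fin (n i)} {i : Fin d} {x : Fin (n i)} :
    x ∈ inF orient v i ↔ x ≠ v i ∧ ¬ orient v (Function.update v i x) := by
  simp [inF]

lemma outmapCount_eq_card (orient : (∀ i, Fin (n i)) → (∀ i, Fin (n i)) → Prop)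
    (v : ∀ i, Fin (n i)) (i : Fin d) :
    outmapCount orient v i = (outF orient v i).card := by
  have h : {x : Fin (n i) | x ≠ v i ∧ orient v (Function.update v i x)}
      = ↑(outF orient v i) := by
    ext x; simp [outF]
  rw [outmapCount, h, Set.ncard_coe_finset]

lemma card_partition (orient : (∀ i, Fin (n i)) → (∀ i, Fin (n i)) → Prop)
    (v : ∀ i, Fin (n i)) (i : Fin d) :
    (outF orient v i).card + (inF orient v i).card = n i - 1 := by
  have hdisj : Disjoint (outF orient v i) (inF orient v i) := by
    rw [Finset.disjoint_left]
    intro x hx hx'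
    simp only [outF, inF, Finset.mem_filter] at hx hx'
    exact hx'.2.2 hx.2.2
  have hunion : outF orient v i ∪ inF orient v i = Finset.univ.erase (v i) := by
    ext x
    simp only [outF, inF, Finset.mem_union, Finset.mem_filter, Finset.mem_erase,
      Finset.mem_univ, and_true, true_and]
    tauto
  have h1 : (outF orient v i ∪ inF orient v i).card = n i - 1 := by
    rw [hunion, Finset.card_erase_of_mem (Finset.mem_univ _), Finset.card_univ,
      Fintype.card_fin]
  rw [← Finset.card_union_of_disjoint hdisj, h1]

lemma inF_card_lt (orient : (∀ i, Fin (n i)) → (∀ i, Fin (n i)) → Prop)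
    (hn : ∀ i, 2 ≤ n i) (v : ∀ i, Fin (n i)) (i : Fin d) :
    (inF orient v i).card < n i := by
  have := card_partition orient v i
  have := hn i
  omega

/-- Hockey stick. -/
lemma hockey (N j : ℕ) : ∑ k ∈ Finset.range N, k.choose j = N.choose (j + 1) := by
  induction N with
  | zero => simp
  | succ N ih =>
    rw [Finset.sum_range_succ, ih, Nat.choose_succ_succ' N j]
    omega

/-- Binomial inversion delta. -/
lemma delta {N c k : ℕ} (hc : c < N) (hk : k < N) :
    ∑ t ∈ Finset.range N, ((k.choose t : ℤ) * ((-1) ^ (t + c) * (t.choose c))) =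
      if k = c then 1 else 0 := by
  rcases lt_or_ge k c with h | h
  · rw [if_neg (by omega)]
    apply Finset.sum_eq_zero
    intro t _
    rcases lt_or_ge t c with h2 | h2
    · simp [Nat.choose_eq_zero_of_lt h2]
    · simp [Nat.choose_eq_zero_of_lt (lt_of_lt_of_le h h2)]
  · have h1 : ∑ t ∈ Finset.range N, ((k.choose t : ℤ) * ((-1) ^ (t + c) * (t.choose c)))
        = ∑ t ∈ Finset.Ico c (k + 1), ((k.choose t : ℤ) * ((-1) ^ (t + c) * (t.choose c))) := by
      rw [Finset.range_eq_Ico]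
      refine (Finset.sum_subset ?_ ?_).symm
      · intro t ht; simp only [Finset.mem_Ico] at ht ⊢; omega
      · intro t ht hnt
        simp only [Finset.mem_Ico] at ht hnt
        rcases lt_or_ge t c with h2 | h2
        · simp [Nat.choose_eq_zero_of_lt h2]
        · have : k < t := by omega
          simp [Nat.choose_eq_zero_of_lt this]
    rw [h1, Finset.sum_Ico_eq_sum_range]
    have h2 : ∀ s ∈ Finset.range (k + 1 - c),
        ((k.choose (c + s) : ℤ) * ((-1) ^ (c + s + c) * ((c + s).choose c)))
          = (k.choose c : ℤ) * ((-1) ^ s * ((k - c).choose s)) := by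
      intro s hs
      simp only [Finset.mem_range] at hs
      have hcs : c + s ≤ k := by omega
      have hid := Nat.choose_mul (n := k) (k := c + s) (Nat.le_add_right c s)
      have hsub : c + s - c = s := by omega
      rw [hsub] at hid
      have hsign : ((-1 : ℤ)) ^ (c + s + c) = (-1) ^ s := by
        have he : c + s + c = 2 * c + s := by omega
        rw [he, pow_add, pow_mul, neg_one_sq, one_pow, one_mul]
      rw [hsign]
      have : (k.choose (c + s) : ℤ) * ((c + s).choose c) = (k.choose c : ℤ) * ((k - c).choose s) := by
        exact_mod_cast congrArg (Nat.cast : ℕ → ℤ) hid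
      calc (k.choose (c + s) : ℤ) * ((-1) ^ s * ((c + s).choose c))
          = ((k.choose (c + s) : ℤ) * ((c + s).choose c)) * (-1) ^ s := by ring
        _ = ((k.choose c : ℤ) * ((k - c).choose s)) * (-1) ^ s := by rw [this]
        _ = (k.choose c : ℤ) * ((-1) ^ s * ((k - c).choose s)) := by ring
    rw [Finset.sum_congr rfl h2, ← Finset.mul_sum]
    have hkc : k + 1 - c = (k - c) + 1 := by omega
    rw [hkc, Int.alternating_sum_range_choose]
    rcases eq_or_ne k c with rfl | hne
    · simp
    · rw [if_neg (by omega), if_neg hne, mul_zero]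

/-- `v` is a sink of the subgrid `insert (v i) (S i)` whenever `S i ⊆ inF orient v i`. -/
lemma sink_of (orient : (∀ i, Fin (n i)) → (∀ i, Fin (n i)) → Prop)
    (v : ∀ i, Fin (n i)) (S : ∀ i, Finset (Fin (n i)))
    (hS : ∀ i, S i ⊆ inF orient v i) :
    IsSinkIn orient (fun i => ↑(insert (v i) (S i))) v := by
  constructor
  · intro i
    simp
  · rintro w hw ⟨i, hvi, hoth⟩
    have hw_eq : w = Function.update v i (w i) := by
      funext j
      by_cases hj : j = i
      · subst hj; rw [Function.update_self]
      · rw [Function.update_of_ne hj]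
        exact (hoth j hj).symm
    have hwi : w i ∈ insert (v i) (S i) := by
      have := hw i
      simpa using this
    have hwS : w i ∈ S i := by
      rcases Finset.mem_insert.mp hwi with h | h
      · exact absurd h.symm hvi
      · exact h
    have := mem_inF.mp (hS i hwS)
    rw [hw_eq]
    exact this.2

/-- Key counting identity: counting subgrids of prescribed sizes via their unique sinks. -/
lemma key (orient : (∀ i, Fin (n i)) → (∀ i, Fin (n i)) → Prop)
    (huso : ∀ N : ∀ i, Set (Fin (n i)), (∀ i, (N i).Nonempty) →
      ∃! v, IsSinkIn orient N v) (j : Fin d → ℕ) :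
    ∑ v : (∀ i, Fin (n i)), ∏ i, ((inF orient v i).card.choose (j i))
      = ∏ i, (n i).choose (j i + 1) := by
  have lhs_eq : ∑ v : (∀ i, Fin (n i)), ∏ i, ((inF orient v i).card.choose (j i))
      = ((Finset.univ : Finset (∀ i, Fin (n i))).sigma
          (fun v => Fintype.piFinset fun i =>
            Finset.powersetCard (j i) (inF orient v i))).card := by
    rw [Finset.card_sigma]
    refine Finset.sum_congr rfl fun v _ => ?_
    rw [Fintype.card_piFinset]
    exact Finset.prod_congr rfl fun i _ => (Finset.card_powersetCard _ _).symm
  have rhs_eq : ∏ i, (n i).choose (j i + 1)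
      = (Fintype.piFinset fun i =>
          Finset.powersetCard (j i + 1) (Finset.univ : Finset (Fin (n i)))).card := by
    rw [Fintype.card_piFinset]
    refine Finset.prod_congr rfl fun i _ => ?_
    rw [Finset.card_powersetCard, Finset.card_univ, Fintype.card_fin]
  rw [lhs_eq, rhs_eq]
  refine Finset.card_bij (fun p _ => fun i => insert (p.1 i) (p.2 i)) ?_ ?_ ?_
  · -- maps into the target
    rintro ⟨v, S⟩ hp
    rw [Finset.mem_sigma] at hp
    have hS : ∀ i, S i ∈ Finset.powersetCard (j i) (inF orient v i) :=
      Fintype.mem_piFinset.mp hp.2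
    rw [Fintype.mem_piFinset]
    intro i
    obtain ⟨hsub, hcard⟩ := Finset.mem_powersetCard.mp (hS i)
    rw [Finset.mem_powersetCard]
    refine ⟨Finset.subset_univ _, ?_⟩
    have hv : v i ∉ S i := fun h => (mem_inF.mp (hsub h)).1 rfl
    rw [Finset.card_insert_of_notMem hv, hcard]
  · -- injective
    rintro ⟨v, S⟩ hp ⟨v', S'⟩ hp' heq
    rw [Finset.mem_sigma] at hp hp'
    have hS : ∀ i, S i ⊆ inF orient v i := fun i =>
      (Finset.mem_powersetCard.mp (Fintype.mem_piFinset.mp hp.2 i)).1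
    have hS' : ∀ i, S' i ⊆ inF orient v' i := fun i =>
      (Finset.mem_powersetCard.mp (Fintype.mem_piFinset.mp hp'.2 i)).1
    have hsink : IsSinkIn orient (fun i => ↑(insert (v i) (S i))) v := sink_of orient v S hS
    have hsink' : IsSinkIn orient (fun i => ↑(insert (v i) (S i))) v' := by
      have := sink_of orient v' S' hS'
      have hfun : (fun i => (↑(insert (v' i) (S' i)) : Set (Fin (n i))))
          = fun i => ↑(insert (v i) (S i)) := by
        funext i
        exact congrArg _ (congrFun heq.symm i)
      rwa [hfun] at this
    have hne : ∀ i, (↑(insert (v i) (S i)) : Set (Fin (n i))).Nonempty :=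
      fun i => ⟨v i, by simp⟩
    obtain ⟨w, _, hw⟩ := huso _ hne
    have hv : v = w := hw v hsink
    have hv' : v' = w := hw v' hsink'
    have hvv : v = v' := hv.trans hv'.symm
    subst hvv
    have hSS : S = S' := by
      funext i
      have h1 : v i ∉ S i := fun h => (mem_inF.mp (hS i h)).1 rfl
      have h2 : v i ∉ S' i := fun h => (mem_inF.mp (hS' i h)).1 rfl
      have h3 : insert (v i) (S i) = insert (v i) (S' i) := congrFun heq i
      rw [← Finset.erase_insert h1, h3, Finset.erase_insert h2]
    rw [hSS]
  · -- surjective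
    intro N hN
    rw [Fintype.mem_piFinset] at hN
    have hcard : ∀ i, (N i).card = j i + 1 := fun i =>
      (Finset.mem_powersetCard.mp (hN i)).2
    have hne : ∀ i, (↑(N i) : Set (Fin (n i))).Nonempty := by
      intro i
      have : (N i).Nonempty := Finset.card_pos.mp (by rw [hcard i]; omega)
      exact ⟨this.choose, this.choose_spec⟩
    obtain ⟨v, hv, _⟩ := huso (fun i => ↑(N i)) hne
    have hvN : ∀ i, v i ∈ N i := hv.1
    refine ⟨⟨v, fun i => (N i).erase (v i)⟩, ?_, ?_⟩
    · rw [Finset.mem_sigma]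
      refine ⟨Finset.mem_univ _, ?_⟩
      rw [Fintype.mem_piFinset]
      intro i
      rw [Finset.mem_powersetCard]
      constructor
      · intro x hx
        obtain ⟨hxne, hxN⟩ := Finset.mem_erase.mp hx
        rw [mem_inF]
        refine ⟨hxne, ?_⟩
        have hmem : ∀ k, Function.update v i x k ∈ (↑(N k) : Set (Fin (n k))) := by
          intro k
          by_cases hk : k = i
          · subst hk; rw [Function.update_self]; exact hxN
          · rw [Function.update_of_ne hk]; exact hvN k
        have hadj : GridAdj v (Function.update v i x) := by
          refine ⟨i, ?_, ?_⟩
          · rw [Function.update_self]; exact fun h => hxne h.symm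
          · intro k hk; rw [Function.update_of_ne hk]
        exact hv.2 _ hmem hadj
      · rw [Finset.card_erase_of_mem (hvN i), hcard i]
        omega
    · funext i
      exact Finset.insert_erase (hvN i)

/-- Every vector in the box is hit exactly once by the complement outmap counts. -/
lemma count_one (orient : (∀ i, Fin (n i)) → (∀ i, Fin (n i)) → Prop)
    (hn : ∀ i, 2 ≤ n i)
    (huso : ∀ N : ∀ i, Set (Fin (n i)), (∀ i, (N i).Nonempty) →
      ∃! v, IsSinkIn orient N v)
    (c : Fin d → ℕ) (hc : ∀ i, c i < n i) :
    (Finset.univ.filter fun v : (∀ i, Fin (n i)) =>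
        (fun i => (inF orient v i).card) = c).card = 1 := by
  have key' : ∀ j : Fin d → ℕ,
      ∑ v : (∀ i, Fin (n i)), ∏ i, (((inF orient v i).card.choose (j i) : ℤ))
        = ∏ i, ((n i).choose (j i + 1) : ℤ) := by
    intro j
    exact_mod_cast key orient huso j
  have hblt : ∀ (v : ∀ i, Fin (n i)) i, (inF orient v i).card < n i :=
    fun v i => inF_card_lt orient hn v i
  set α : (i : Fin d) → ℕ → ℤ := fun i t => (-1) ^ (t + c i) * (t.choose (c i)) with hα
  set f : (i : Fin d) → ℕ → ℤ :=
    fun i k => ∑ t ∈ Finset.range (n i), (k.choose t : ℤ) * α i t with hf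
  have hfδ : ∀ i k, k < n i → f i k = if k = c i then 1 else 0 :=
    fun i k hk => delta (hc i) hk
  have way1 : ∑ v : (∀ i, Fin (n i)), ∏ i, f i ((inF orient v i).card)
      = ((Finset.univ.filter fun v : (∀ i, Fin (n i)) =>
          (fun i => (inF orient v i).card) = c).card : ℤ) := by
    rw [← Finset.sum_boole]
    refine Finset.sum_congr rfl fun v _ => ?_
    have h1 : ∀ i, f i ((inF orient v i).card)
        = if (inF orient v i).card = c i then 1 else 0 := fun i => hfδ i _ (hblt v i)
    rw [Finset.prod_congr rfl (fun i _ => h1 i), Fintype.prod_boole]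
    by_cases h : (fun i => (inF orient v i).card) = c
    · rw [if_pos (fun i => congrFun h i), if_pos h]
    · rw [if_neg (fun hall => h (funext hall)), if_neg h]
  have way2 : ∑ v : (∀ i, Fin (n i)), ∏ i, f i ((inF orient v i).card) = 1 := by
    have expand : ∀ v : (∀ i, Fin (n i)), ∏ i, f i ((inF orient v i).card)
        = ∑ p ∈ Fintype.piFinset (fun i => Finset.range (n i)),
            ∏ i, (((inF orient v i).card.choose (p i) : ℤ) * α i (p i)) := by
      intro v
      exact Finset.prod_univ_sum _ _
    rw [Finset.sum_congr rfl (fun v _ => expand v), Finset.sum_comm]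
    have step : ∀ p ∈ Fintype.piFinset (fun i => Finset.range (n i)),
        ∑ v : (∀ i, Fin (n i)), ∏ i, (((inF orient v i).card.choose (p i) : ℤ) * α i (p i))
          = ∏ i, (((n i).choose (p i + 1) : ℤ) * α i (p i)) := by
      intro p _
      calc ∑ v : (∀ i, Fin (n i)), ∏ i, (((inF orient v i).card.choose (p i) : ℤ) * α i (p i))
          = ∑ v : (∀ i, Fin (n i)),
              (∏ i, ((inF orient v i).card.choose (p i) : ℤ)) * ∏ i, α i (p i) := by
            exact Finset.sum_congr rfl fun v _ => Finset.prod_mul_distrib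
        _ = (∑ v : (∀ i, Fin (n i)), ∏ i, ((inF orient v i).card.choose (p i) : ℤ))
              * ∏ i, α i (p i) := by rw [← Finset.sum_mul]
        _ = (∏ i, ((n i).choose (p i + 1) : ℤ)) * ∏ i, α i (p i) := by rw [key' p]
        _ = ∏ i, (((n i).choose (p i + 1) : ℤ) * α i (p i)) := Finset.prod_mul_distrib.symm
    rw [Finset.sum_congr rfl step,
      ← Finset.prod_univ_sum (fun i => Finset.range (n i))
        (fun i t => ((n i).choose (t + 1) : ℤ) * α i t)]
    have last : ∀ i : Fin d,
        ∑ t ∈ Finset.range (n i), ((n i).choose (t + 1) : ℤ) * α i t = 1 := by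
      intro i
      have hs : ∀ t ∈ Finset.range (n i), ((n i).choose (t + 1) : ℤ) * α i t
          = ∑ k ∈ Finset.range (n i), (k.choose t : ℤ) * α i t := by
        intro t _
        rw [← Finset.sum_mul]
        congr 1
        have := hockey (n i) t
        exact_mod_cast congrArg (Nat.cast : ℕ → ℤ) this.symm
      rw [Finset.sum_congr rfl hs, Finset.sum_comm]
      have hδ : ∀ k ∈ Finset.range (n i),
          ∑ t ∈ Finset.range (n i), (k.choose t : ℤ) * α i t
            = if k = c i then 1 else 0 := by
        intro k hk
        exact hfδ i k (Finset.mem_range.mp hk)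
      rw [Finset.sum_congr rfl hδ,
        Finset.sum_ite_eq' (Finset.range (n i)) (c i) (fun _ => (1 : ℤ)),
        if_pos (Finset.mem_range.mpr (hc i))]
    rw [Finset.prod_congr rfl (fun i _ => last i), Finset.prod_const_one]
  have := way1.symm.trans way2
  exact_mod_cast this

end StmtAux

/-- In a grid unique sink orientation, the outmap is a bijection onto
`{0,…,n₁−1} × ⋯ × {0,…,n_d−1}`. -/
theorem stmt1 {d : ℕ} {n : Fin d → ℕ} (hn : ∀ i, 2 ≤ n i)
    (orient : (∀ i, Fin (n i)) → (∀ i, Fin (n i)) → Prop)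
    (horient : ∀ u v, GridAdj u v → (orient u v ↔ ¬ orient v u))
    (huso : ∀ N : ∀ i, Set (Fin (n i)), (∀ i, (N i).Nonempty) →
      ∃! v, IsSinkIn orient N v) :
    (∀ v i, outmapCount orient v i < n i) ∧
    (Function.Injective (outmapCount orient)) ∧
    (∀ a : Fin d → ℕ, (∀ i, a i < n i) → ∃ v, outmapCount orient v = a) := by
  classical
  have hpart : ∀ (v : ∀ i, Fin (n i)) i,
      outmapCount orient v i + (StmtAux.inF orient v i).card = n i - 1 := by
    intro v i
    rw [StmtAux.outmapCount_eq_card]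
    exact StmtAux.card_partition orient v i
  refine ⟨?_, ?_, ?_⟩
  · intro v i
    have := hpart v i
    have := hn i
    omega
  · intro u v huv
    have hb : (fun i => (StmtAux.inF orient u i).card)
        = fun i => (StmtAux.inF orient v i).card := by
      funext i
      have h1 := hpart u i
      have h2 := hpart v i
      have h3 : outmapCount orient u i = outmapCount orient v i := congrFun huv i
      omega
    have hc : ∀ i, (StmtAux.inF orient u i).card < n i :=
      fun i => StmtAux.inF_card_lt orient hn u i
    have hcard := StmtAux.count_one orient hn huso
      (fun i => (StmtAux.inF orient u i).card) hc
    obtain ⟨w, hw⟩ := Finset.card_eq_one.mp hcard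
    have hu : u ∈ Finset.univ.filter fun x : (∀ i, Fin (n i)) =>
        (fun i => (StmtAux.inF orient x i).card)
          = fun i => (StmtAux.inF orient u i).card := by
      simp
    have hv : v ∈ Finset.univ.filter fun x : (∀ i, Fin (n i)) =>
        (fun i => (StmtAux.inF orient x i).card)
          = fun i => (StmtAux.inF orient u i).card := by
      simp only [Finset.mem_filter, Finset.mem_univ, true_and]
      exact hb.symm
    rw [hw, Finset.mem_singleton] at hu hv
    exact hu.trans hv.symm
  · intro a ha
    set c : Fin d → ℕ := fun i => n i - 1 - a i with hcdef
    have hc : ∀ i, c i < n i := by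
      intro i
      have := hn i
      simp only [hcdef]
      omega
    have hcard := StmtAux.count_one orient hn huso c hc
    have hpos : 0 < (Finset.univ.filter fun v : (∀ i, Fin (n i)) =>
        (fun i => (StmtAux.inF orient v i).card) = c).card := by omega
    obtain ⟨v, hv⟩ := Finset.card_pos.mp hpos
    have hv' : (fun i => (StmtAux.inF orient v i).card) = c :=
      (Finset.mem_filter.mp hv).2
    refine ⟨v, ?_⟩
    funext i
    have h1 := hpart v i
    have h2 : (StmtAux.inF orient v i).card = c i := congrFun hv' i
    have h3 : c i = n i - 1 - a i := rfl
    have h4 := ha i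
    omega
end

section
/- Let d ≥ 1 and for each i ∈ [d] let H_i be a finite family of closed half-space boundary functionals: concretely, suppose each color class H_i consists of n_i affine hyperplanes in ℝ^d (each given with an orientation), such that (H₁, ..., H_d) is well-separated, meaning for every sign vector s ∈ {+,−}^d there exists a point x_s lying strictly above every hyperplane of H_i when s_i = + and strictly below every hyperplane of H_i when s_i = −, and such that any d hyperplanes, one per color, intersect in a single point, and no point lies on d+1 hyperplanes. Then for every (α₁, ..., α_d) ∈ [n₁] × ... × [n_d], there exists a unique point x ∈ ℝ^d lying on exactly one hyperplane of each color i and lying strictly above exactly α_i − 1 hyperplanes of color i, for all i. -/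
/-- The value of the affine functional defining the oriented hyperplane `h = (w, c)`
at the point `x`: the hyperplane is its zero set, a point is above (below) it iff the
value is positive (negative). -/
def aval {d : ℕ} (h : (Fin d → ℝ) × ℝ) (x : Fin d → ℝ) : ℝ :=
  (∑ j, h.1 j * x j) + h.2

/-- Difference of values of an affine functional at two points. -/
lemma aval_sub {d : ℕ} (h : (Fin d → ℝ) × ℝ) (x y : Fin d → ℝ) :
    aval h x - aval h y = ∑ j, h.1 j * (x j - y j) := by
  simp only [aval, add_sub_add_right_eq_sub, ← Finset.sum_sub_distrib]
  exact Finset.sum_congr rfl fun j _ => (mul_sub _ _ _).symm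

/-- If `x` lies on exactly one level-zero functional and strictly above `b` of them,
and `y` is strictly above exactly `b` of them, then some functional is nonnegative at
`x` and nonpositive at `y`. -/
lemma cross {m b : ℕ} (g h : Fin m → ℝ)
    (h1 : {k | g k = 0}.ncard = 1) (h2 : {k | 0 < g k}.ncard = b)
    (h3 : {k | 0 < h k}.ncard = b) : ∃ k, 0 ≤ g k ∧ h k ≤ 0 := by
  by_contra hc
  push_neg at hc
  have hsub : {k | 0 ≤ g k} ⊆ {k | 0 < h k} := fun k hk => hc k hk
  have hun : {k : Fin m | 0 ≤ g k} = {k | 0 < g k} ∪ {k | g k = 0} := by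
    ext k
    simp only [Set.mem_setOf_eq, Set.mem_union]
    constructor
    · intro hk
      rcases hk.lt_or_eq with h | h
      · exact Or.inl h
      · exact Or.inr h.symm
    · rintro (h | h)
      · exact h.le
      · exact h.ge
  have hdisj : Disjoint {k : Fin m | 0 < g k} {k | g k = 0} := by
    rw [Set.disjoint_left]
    intro k hk1 hk2
    simp only [Set.mem_setOf_eq] at hk1 hk2
    exact absurd hk2 (by linarith)
  have hcard : {k : Fin m | 0 ≤ g k}.ncard = b + 1 := by
    rw [hun, Set.ncard_union_eq hdisj (Set.toFinite _) (Set.toFinite _), h1, h2]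
  have hle := Set.ncard_le_ncard hsub (Set.toFinite _)
  rw [hcard, h3] at hle
  omega

lemma conv_pos {p q a b : ℝ} (hp : 0 ≤ p) (hq : 0 ≤ q) (hpq : 0 < p + q)
    (ha : 0 < a) (hb : 0 < b) : 0 < p * a + q * b := by
  rcases hp.lt_or_eq with h | h
  · nlinarith
  · have hq' : 0 < q := by linarith
    nlinarith

lemma conv_neg {p q a b : ℝ} (hp : 0 ≤ p) (hq : 0 ≤ q) (hpq : 0 < p + q)
    (ha : a < 0) (hb : b < 0) : p * a + q * b < 0 := by
  have := conv_pos hp hq hpq (neg_pos.mpr ha) (neg_pos.mpr hb)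
  nlinarith

/-- Uniqueness part: two points with the same exact on/above counts coincide.
Only well-separation is needed. -/
lemma uniq_sol {d : ℕ} {n : Fin d → ℕ}
    (H : ∀ i : Fin d, Fin (n i) → (Fin d → ℝ) × ℝ)
    (hsep : ∀ s : Fin d → Bool, ∃ x : Fin d → ℝ, ∀ i k,
      (s i = true → 0 < aval (H i k) x) ∧ (s i = false → aval (H i k) x < 0))
    (β : Fin d → ℕ) (x y : Fin d → ℝ)
    (hx : ∀ i, {k : Fin (n i) | aval (H i k) x = 0}.ncard = 1 ∧
      {k : Fin (n i) | 0 < aval (H i k) x}.ncard = β i)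
    (hy : ∀ i, {k : Fin (n i) | aval (H i k) y = 0}.ncard = 1 ∧
      {k : Fin (n i) | 0 < aval (H i k) y}.ncard = β i) :
    x = y := by
  classical
  by_contra hne
  rcases Nat.eq_zero_or_pos d with hd0 | hd0
  · exact hne (funext fun j => absurd j.isLt (by omega))
  have : Nonempty (Fin d) := ⟨⟨0, hd0⟩⟩
  -- for each color, a functional nonneg at x and nonpos at y, and vice versa
  have hk : ∀ i, ∃ k, 0 ≤ aval (H i k) x ∧ aval (H i k) y ≤ 0 := fun i =>
    cross _ _ (hx i).1 (hx i).2 (hy i).2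
  have hk' : ∀ i, ∃ k, 0 ≤ aval (H i k) y ∧ aval (H i k) x ≤ 0 := fun i =>
    cross _ _ (hy i).1 (hy i).2 (hx i).2
  choose k hk1 hk2 using hk
  choose k' hk1' hk2' using hk'
  set v : Fin d → ℝ := fun j => x j - y j with hv
  have hvne : v ≠ 0 := by
    intro h
    apply hne
    funext j
    have := congrFun h j
    simpa [hv, sub_eq_zero] using this
  set A : Fin d → ℝ := fun i => ∑ j, (H i (k i)).1 j * v j with hA
  set B : Fin d → ℝ := fun i => ∑ j, (H i (k' i)).1 j * v j with hB
  have hApos : ∀ i, 0 ≤ A i := by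
    intro i
    have := aval_sub (H i (k i)) x y
    have h1 := hk1 i; have h2 := hk2 i
    simp only [hA]
    linarith [this]
  have hBneg : ∀ i, B i ≤ 0 := by
    intro i
    have := aval_sub (H i (k' i)) x y
    have h1 := hk1' i; have h2 := hk2' i
    simp only [hB]
    linarith [this]
  set p : Fin d → ℝ := fun i => if A i = 0 ∧ B i = 0 then 1 else -B i with hp
  set q : Fin d → ℝ := fun i => if A i = 0 ∧ B i = 0 then 0 else A i with hq
  have hppos : ∀ i, 0 ≤ p i := by
    intro i
    by_cases h : A i = 0 ∧ B i = 0 <;> simp [hp, h]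
    · exact hBneg i
  have hqpos : ∀ i, 0 ≤ q i := by
    intro i
    by_cases h : A i = 0 ∧ B i = 0 <;> simp [hq, h]
    · exact hApos i
  have hpq : ∀ i, 0 < p i + q i := by
    intro i
    by_cases h : A i = 0 ∧ B i = 0 <;> simp [hp, hq, h]
    have h1 := hApos i; have h2 := hBneg i
    rcases h1.lt_or_eq with h1' | h1'
    · linarith
    · rcases h2.lt_or_eq with h2' | h2'
      · linarith
      · exact absurd ⟨h1'.symm, h2'⟩ h
  have horth : ∀ i, p i * A i + q i * B i = 0 := by
    intro i
    by_cases h : A i = 0 ∧ B i = 0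
    · simp [hp, hq, h, h.1, h.2]
    · simp only [hp, hq, if_neg h]
      ring
  set u : Fin d → Fin d → ℝ :=
    fun i j => p i * (H i (k i)).1 j + q i * (H i (k' i)).1 j with hu
  have horthu : ∀ i, ∑ j, u i j * v j = 0 := by
    intro i
    have : ∑ j, u i j * v j = p i * A i + q i * B i := by
      simp only [hu, hA, hB, Finset.mul_sum]
      rw [← Finset.sum_add_distrib]
      exact Finset.sum_congr rfl fun j _ => by ring
    rw [this, horth]
  -- the u i are linearly dependent
  have hnli : ¬ LinearIndependent ℝ u := by
    intro hli
    have hcard : Fintype.card (Fin d) = Module.finrank ℝ (Fin d → ℝ) := by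
      simp [Module.finrank_fin_fun]
    let bas := basisOfLinearIndependentOfCardEqFinrank hli hcard
    have hbas : ∀ i, bas i = u i := fun i =>
      congrFun (coe_basisOfLinearIndependentOfCardEqFinrank hli hcard) i
    have hvrep := bas.sum_repr v
    have hv' : ∀ j, v j = ∑ i, bas.repr v i * u i j := by
      intro j
      have h1 := congrFun hvrep j
      rw [Finset.sum_apply] at h1
      rw [← h1]
      exact Finset.sum_congr rfl fun i _ => by
        simp [hbas i, Pi.smul_apply, smul_eq_mul]
    have hzero : ∑ j, v j * v j = 0 := by
      calc ∑ j, v j * v j = ∑ j, (∑ i, bas.repr v i * u i j) * v j :=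
            Finset.sum_congr rfl fun j _ => by rw [← hv' j]
        _ = ∑ j, ∑ i, bas.repr v i * (u i j * v j) := by
            exact Finset.sum_congr rfl fun j _ => by
              rw [Finset.sum_mul]
              exact Finset.sum_congr rfl fun i _ => by ring
        _ = ∑ i, bas.repr v i * ∑ j, u i j * v j := by
            rw [Finset.sum_comm]
            exact Finset.sum_congr rfl fun i _ => by rw [Finset.mul_sum]
        _ = 0 := by simp [horthu]
    apply hvne
    funext j
    have hnn : ∀ j ∈ Finset.univ, 0 ≤ v j * v j := fun j _ => mul_self_nonneg _
    have := (Finset.sum_eq_zero_iff_of_nonneg hnn).mp hzero j (Finset.mem_univ j)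
    exact mul_self_eq_zero.mp this
  obtain ⟨μ, hμ, i₀, hi₀⟩ := Fintype.not_linearIndependent_iff.mp hnli
  -- the combined functional is constant
  set G : (Fin d → ℝ) → ℝ := fun z =>
    ∑ i, μ i * (p i * aval (H i (k i)) z + q i * aval (H i (k' i)) z) with hG
  set C : ℝ := ∑ i, μ i * (p i * (H i (k i)).2 + q i * (H i (k' i)).2) with hC
  have hcomb : ∀ z : Fin d → ℝ, ∑ i, μ i * (∑ j, u i j * z j) = 0 := by
    intro z
    have h1 : ∀ j, (∑ i, μ i • u i) j = 0 := fun j => congrFun hμ j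
    calc ∑ i, μ i * (∑ j, u i j * z j)
        = ∑ i, ∑ j, μ i * u i j * z j := by
          exact Finset.sum_congr rfl fun i _ => by
            rw [Finset.mul_sum]
            exact Finset.sum_congr rfl fun j _ => by ring
      _ = ∑ j, (∑ i, μ i * u i j) * z j := by
          rw [Finset.sum_comm]
          exact Finset.sum_congr rfl fun j _ => by rw [Finset.sum_mul]
      _ = 0 := by
          apply Finset.sum_eq_zero
          intro j _
          have := h1 j
          rw [Finset.sum_apply] at this
          simp only [Pi.smul_apply, smul_eq_mul] at this
          rw [this, zero_mul]
  have hGC : ∀ z, G z = C := by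
    intro z
    have hexp : G z = (∑ i, μ i * (∑ j, u i j * z j)) + C := by
      simp only [hG, hC, ← Finset.sum_add_distrib]
      refine Finset.sum_congr rfl fun i _ => ?_
      have e1 : ∑ j, u i j * z j =
          p i * (∑ j, (H i (k i)).1 j * z j) + q i * (∑ j, (H i (k' i)).1 j * z j) := by
        simp only [hu, Finset.mul_sum]
        rw [← Finset.sum_add_distrib]
        exact Finset.sum_congr rfl fun j _ => by ring
      rw [e1]
      simp only [aval]
      ring
    rw [hexp, hcomb z, zero_add]
  -- sign contradiction
  obtain ⟨xs, hxs⟩ := hsep fun i => decide (μ i < 0)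
  obtain ⟨xt, hxt⟩ := hsep fun i => decide (0 < μ i)
  have hneg : G xs < 0 := by
    rw [hG]
    have h0 : (0 : ℝ) = ∑ _i : Fin d, (0 : ℝ) := by simp
    calc ∑ i, μ i * (p i * aval (H i (k i)) xs + q i * aval (H i (k' i)) xs)
        < ∑ _i : Fin d, (0 : ℝ) := by
          apply Finset.sum_lt_sum
          · intro i _
            rcases lt_trichotomy (μ i) 0 with h | h | h
            · have hs : (decide (μ i < 0)) = true := decide_eq_true h
              have h1 := ((hxs i (k i)).1 hs)
              have h2 := ((hxs i (k' i)).1 hs)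
              have := conv_pos (hppos i) (hqpos i) (hpq i) h1 h2
              nlinarith
            · rw [h]; simp
            · have hs : (decide (μ i < 0)) = false := decide_eq_false (by linarith)
              have h1 := ((hxs i (k i)).2 hs)
              have h2 := ((hxs i (k' i)).2 hs)
              have := conv_neg (hppos i) (hqpos i) (hpq i) h1 h2
              nlinarith
          · refine ⟨i₀, Finset.mem_univ _, ?_⟩
            rcases lt_trichotomy (μ i₀) 0 with h | h | h
            · have hs : (decide (μ i₀ < 0)) = true := decide_eq_true h
              have h1 := ((hxs i₀ (k i₀)).1 hs)
              have h2 := ((hxs i₀ (k' i₀)).1 hs)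
              have := conv_pos (hppos i₀) (hqpos i₀) (hpq i₀) h1 h2
              nlinarith
            · exact absurd h hi₀
            · have hs : (decide (μ i₀ < 0)) = false := decide_eq_false (by linarith)
              have h1 := ((hxs i₀ (k i₀)).2 hs)
              have h2 := ((hxs i₀ (k' i₀)).2 hs)
              have := conv_neg (hppos i₀) (hqpos i₀) (hpq i₀) h1 h2
              nlinarith
      _ = 0 := by simp
  have hpos : 0 < G xt := by
    rw [hG]
    calc (0:ℝ) = ∑ _i : Fin d, (0 : ℝ) := by simp
      _ < ∑ i, μ i * (p i * aval (H i (k i)) xt + q i * aval (H i (k' i)) xt) := by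
          apply Finset.sum_lt_sum
          · intro i _
            rcases lt_trichotomy (μ i) 0 with h | h | h
            · have hs : (decide (0 < μ i)) = false := decide_eq_false (by linarith)
              have h1 := ((hxt i (k i)).2 hs)
              have h2 := ((hxt i (k' i)).2 hs)
              have := conv_neg (hppos i) (hqpos i) (hpq i) h1 h2
              nlinarith
            · rw [h]; simp
            · have hs : (decide (0 < μ i)) = true := decide_eq_true h
              have h1 := ((hxt i (k i)).1 hs)
              have h2 := ((hxt i (k' i)).1 hs)
              have := conv_pos (hppos i) (hqpos i) (hpq i) h1 h2
              nlinarith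
          · refine ⟨i₀, Finset.mem_univ _, ?_⟩
            rcases lt_trichotomy (μ i₀) 0 with h | h | h
            · have hs : (decide (0 < μ i₀)) = false := decide_eq_false (by linarith)
              have h1 := ((hxt i₀ (k i₀)).2 hs)
              have h2 := ((hxt i₀ (k' i₀)).2 hs)
              have := conv_neg (hppos i₀) (hqpos i₀) (hpq i₀) h1 h2
              nlinarith
            · exact absurd h hi₀
            · have hs : (decide (0 < μ i₀)) = true := decide_eq_true h
              have h1 := ((hxt i₀ (k i₀)).1 hs)
              have h2 := ((hxt i₀ (k' i₀)).1 hs)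
              have := conv_pos (hppos i₀) (hqpos i₀) (hpq i₀) h1 h2
              nlinarith
  rw [hGC xs] at hneg
  rw [hGC xt] at hpos
  linarith

/-- α-Ham-Sandwich for well-separated rainbow arrangements of affine hyperplanes:
there is a unique point on exactly one hyperplane of each color and strictly above
exactly `α i − 1` hyperplanes of each color `i`. -/
theorem stmt7 {d : ℕ} (hd : 1 ≤ d) {n : Fin d → ℕ}
    (H : ∀ i : Fin d, Fin (n i) → (Fin d → ℝ) × ℝ)
    (hnz : ∀ i k, (H i k).1 ≠ 0)
    (hsep : ∀ s : Fin d → Bool, ∃ x : Fin d → ℝ, ∀ i k,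
      (s i = true → 0 < aval (H i k) x) ∧ (s i = false → aval (H i k) x < 0))
    (hrainbow : ∀ κ : ∀ i, Fin (n i), ∃! x : Fin d → ℝ, ∀ i, aval (H i (κ i)) x = 0)
    (hnd : ∀ x : Fin d → ℝ,
      {p : (i : Fin d) × Fin (n i) | aval (H p.1 p.2) x = 0}.ncard ≤ d)
    (α : Fin d → ℕ) (hα : ∀ i, 1 ≤ α i ∧ α i ≤ n i) :
    ∃! x : Fin d → ℝ, ∀ i,
      {k : Fin (n i) | aval (H i k) x = 0}.ncard = 1 ∧
      {k : Fin (n i) | 0 < aval (H i k) x}.ncard = α i - 1 := by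
  classical
  choose xv hxv using fun κ : ∀ i, Fin (n i) => (hrainbow κ).exists
  -- at a rainbow vertex, the only zero of color i is κ i
  have hzero : ∀ κ i k, aval (H i k) (xv κ) = 0 → k = κ i := by
    intro κ i k hk
    by_contra hkne
    set f : Fin d → (i : Fin d) × Fin (n i) := fun i => ⟨i, κ i⟩ with hf
    have hinj : Function.Injective f := fun a b hab => congrArg Sigma.fst hab
    have hsubr : Set.range f ⊆ {p : (i : Fin d) × Fin (n i) | aval (H p.1 p.2) (xv κ) = 0} := by
      rintro _ ⟨i', rfl⟩
      exact hxv κ i'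
    have hnotmem : (⟨i, k⟩ : (i : Fin d) × Fin (n i)) ∉ Set.range f := by
      rintro ⟨j, hj⟩
      have h1 : j = i := congrArg Sigma.fst hj
      subst h1
      have h2 : κ j = k := by
        have := (Sigma.mk.inj_iff.mp hj).2
        exact eq_of_heq this
      exact hkne h2.symm
    have hins : insert (⟨i, k⟩ : (i : Fin d) × Fin (n i)) (Set.range f) ⊆
        {p : (i : Fin d) × Fin (n i) | aval (H p.1 p.2) (xv κ) = 0} :=
      Set.insert_subset hk hsubr
    have hc1 : (Set.range f).ncard = d := by
      rw [← Set.image_univ, Set.ncard_image_of_injective _ hinj, Set.ncard_univ,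
        Nat.card_eq_fintype_card, Fintype.card_fin]
    have hc2 : (insert (⟨i, k⟩ : (i : Fin d) × Fin (n i)) (Set.range f)).ncard = d + 1 := by
      rw [Set.ncard_insert_of_notMem hnotmem (Set.toFinite _), hc1]
    have hle := Set.ncard_le_ncard hins (Set.toFinite _)
    rw [hc2] at hle
    have := hnd (xv κ)
    omega
  have hsol : ∀ κ i, {k : Fin (n i) | aval (H i k) (xv κ) = 0}.ncard = 1 := by
    intro κ i
    have hset : {k : Fin (n i) | aval (H i k) (xv κ) = 0} = {κ i} := by
      ext m
      simp only [Set.mem_setOf_eq, Set.mem_singleton_iff]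
      constructor
      · exact hzero κ i m
      · rintro rfl
        exact hxv κ i
    rw [hset, Set.ncard_singleton]
  have hbound : ∀ κ i, {k : Fin (n i) | 0 < aval (H i k) (xv κ)}.ncard < n i := by
    intro κ i
    have hnotmem : κ i ∉ {k : Fin (n i) | 0 < aval (H i k) (xv κ)} := by
      simp only [Set.mem_setOf_eq, hxv κ i]
      exact lt_irrefl 0
    have hins : insert (κ i) {k : Fin (n i) | 0 < aval (H i k) (xv κ)} ⊆ Set.univ :=
      Set.subset_univ _
    have hc := Set.ncard_insert_of_notMem hnotmem (Set.toFinite _)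
    have hle := Set.ncard_le_ncard hins Set.finite_univ
    rw [hc, Set.ncard_univ, Nat.card_eq_fintype_card, Fintype.card_fin] at hle
    omega
  set Φ : (∀ i, Fin (n i)) → (∀ i, Fin (n i)) :=
    fun κ i => ⟨{k : Fin (n i) | 0 < aval (H i k) (xv κ)}.ncard, hbound κ i⟩ with hΦ
  have hΦinj : Function.Injective Φ := by
    intro κ κ' h
    have hcnt : ∀ i, {k : Fin (n i) | 0 < aval (H i k) (xv κ)}.ncard =
        {k : Fin (n i) | 0 < aval (H i k) (xv κ')}.ncard := fun i =>
      congrArg Fin.val (congrFun h i)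
    have hxy : xv κ = xv κ' :=
      uniq_sol H hsep (fun i => {k : Fin (n i) | 0 < aval (H i k) (xv κ)}.ncard)
        (xv κ) (xv κ') (fun i => ⟨hsol κ i, rfl⟩)
        (fun i => ⟨hsol κ' i, (hcnt i).symm⟩)
    funext i
    have : aval (H i (κ' i)) (xv κ) = 0 := by rw [hxy]; exact hxv κ' i
    exact (hzero κ i (κ' i) this).symm
  have hΦsurj : Function.Surjective Φ := Finite.injective_iff_surjective.mp hΦinj
  obtain ⟨κ, hκ⟩ := hΦsurj fun i => ⟨α i - 1, by have := hα i; omega⟩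
  have hκ' : ∀ i, {k : Fin (n i) | 0 < aval (H i k) (xv κ)}.ncard = α i - 1 := fun i =>
    congrArg Fin.val (congrFun hκ i)
  refine ⟨xv κ, fun i => ⟨hsol κ i, hκ' i⟩, ?_⟩
  intro y hy
  exact uniq_sol H hsep (fun i => α i - 1) y (xv κ) hy fun i => ⟨hsol κ i, hκ' i⟩
end

section
/- Let H₁, ..., H_d be finite sets of oriented affine hyperplanes in ℝ^d with |H_i| = n_i, satisfying the rainbow condition (every colorful d-tuple of hyperplanes meets in a single point) and non-degeneracy (no point lies on more than d hyperplanes). Suppose that for every α ∈ [n₁] × ... × [n_d] there exists at least one point x_α lying on exactly one hyperplane of each color and strictly above exactly α_i − 1 hyperplanes of color i for each i. Then each such point x_α is unique, i.e., the map α ↦ x_α is injective onto the set of colorful intersection points, and since there are exactly n₁⋯n_d colorful intersection candidates and n₁⋯n_d values of α, for each α the point x_α is uniquely determined. -/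
/-- Uniqueness via counting: in a rainbow, non-degenerate arrangement, if for every
valid `α` some point realizes `α`, then for every valid `α` that point is unique. -/
theorem stmt8 {d : ℕ} (hd : 1 ≤ d) {n : Fin d → ℕ}
    (H : ∀ i : Fin d, Fin (n i) → (Fin d → ℝ) × ℝ)
    (hnz : ∀ i k, (H i k).1 ≠ 0)
    (hrainbow : ∀ κ : ∀ i, Fin (n i), ∃! x : Fin d → ℝ, ∀ i, aval (H i (κ i)) x = 0)
    (hnd : ∀ x : Fin d → ℝ,
      {p : (i : Fin d) × Fin (n i) | aval (H p.1 p.2) x = 0}.ncard ≤ d)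
    (hex : ∀ α : Fin d → ℕ, (∀ i, 1 ≤ α i ∧ α i ≤ n i) →
      ∃ x : Fin d → ℝ, ∀ i,
        {k : Fin (n i) | aval (H i k) x = 0}.ncard = 1 ∧
        {k : Fin (n i) | 0 < aval (H i k) x}.ncard = α i - 1) :
    ∀ α : Fin d → ℕ, (∀ i, 1 ≤ α i ∧ α i ≤ n i) →
      ∃! x : Fin d → ℝ, ∀ i,
        {k : Fin (n i) | aval (H i k) x = 0}.ncard = 1 ∧
        {k : Fin (n i) | 0 < aval (H i k) x}.ncard = α i - 1 := by
  classical
  -- two points satisfying the same colorful system are equal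
  have hinj : ∀ (z w : Fin d → ℝ) (κ : ∀ i, Fin (n i)),
      (∀ i, aval (H i (κ i)) z = 0) → (∀ i, aval (H i (κ i)) w = 0) → z = w := by
    intro z w κ hz hw
    obtain ⟨u, _, hun⟩ := hrainbow κ
    rw [hun z hz, hun w hw]
  -- membership of the singleton element
  have mem_of : ∀ (z : Fin d → ℝ) (κ : ∀ i, Fin (n i)),
      (∀ i, {k | aval (H i k) z = 0} = {κ i}) → ∀ i, aval (H i (κ i)) z = 0 := by
    intro z κ h i
    have : κ i ∈ {k | aval (H i k) z = 0} := by rw [h i]; exact rfl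
    exact this
  -- extract the colorful tuple of a realizing point
  have key : ∀ (z : Fin d → ℝ), (∀ i, ({k | aval (H i k) z = 0}).ncard = 1) →
      ∃ κ : ∀ i, Fin (n i), ∀ i, {k | aval (H i k) z = 0} = {κ i} := by
    intro z hz
    choose κ hκ using fun i => Set.ncard_eq_one.mp (hz i)
    exact ⟨κ, hκ⟩
  -- chosen realizing points for every α coded by a tuple a : Π i, Fin (n i)
  choose X hX using fun (a : ∀ i, Fin (n i)) =>
    hex (fun i => (a i : ℕ) + 1)
      (fun i => ⟨Nat.le_add_left 1 _, Nat.succ_le_of_lt (a i).isLt⟩)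
  choose κf hκf using fun a => key (X a) (fun i => (hX a i).1)
  -- κf is injective
  have hfinj : Function.Injective κf := by
    intro a b hab
    have hXab : X a = X b := by
      refine hinj _ _ (κf a) (mem_of _ _ (hκf a)) ?_
      intro i
      have := mem_of _ _ (hκf b) i
      rw [hab]
      exact this
    funext i
    have ha : ({k | 0 < aval (H i k) (X a)}).ncard = (a i : ℕ) + 1 - 1 := (hX a i).2
    have hb : ({k | 0 < aval (H i k) (X b)}).ncard = (b i : ℕ) + 1 - 1 := (hX b i).2
    rw [hXab] at ha
    exact Fin.ext (by omega : (a i : ℕ) = b i)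
  have hfsurj : Function.Surjective κf := Finite.surjective_of_injective hfinj
  -- main argument
  intro α hα
  obtain ⟨x, hx⟩ := hex α hα
  refine ⟨x, hx, ?_⟩
  intro y hy
  -- any realizer z of α equals X c where c i = α i - 1
  have main : ∀ z : Fin d → ℝ, (∀ i,
      {k : Fin (n i) | aval (H i k) z = 0}.ncard = 1 ∧
      {k : Fin (n i) | 0 < aval (H i k) z}.ncard = α i - 1) →
      ∃ a, z = X a ∧ ∀ i, (a i : ℕ) = α i - 1 := by
    intro z hz
    obtain ⟨κz, hκz⟩ := key z (fun i => (hz i).1)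
    obtain ⟨a, ha⟩ := hfsurj κz
    have hzXa : z = X a := by
      refine hinj _ _ κz (mem_of _ _ hκz) ?_
      intro i
      have := mem_of _ _ (hκf a) i
      rw [ha] at this
      exact this
    refine ⟨a, hzXa, fun i => ?_⟩
    have h1 : ({k | 0 < aval (H i k) (X a)}).ncard = (a i : ℕ) + 1 - 1 := (hX a i).2
    have h2 : ({k | 0 < aval (H i k) z}).ncard = α i - 1 := (hz i).2
    rw [hzXa] at h2
    omega
  obtain ⟨a, hya, haα⟩ := main y hy
  obtain ⟨b, hxb, hbα⟩ := main x hx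
  have : a = b := funext fun i => Fin.ext (by rw [haα i, hbα i])
  rw [hya, hxb, this]
end

section
/- Consider a 2-dimensional grid graph on [n₁] × [n₂] (product of two complete graphs). An orientation σ of its edges is a unique sink orientation if and only if (i) every induced subgrid has a sink, and (ii) every subcube (induced by two elements in each coordinate, or by one element in one coordinate and two in the other) has a unique sink. -/
/-- Adjacency in the 2-dimensional grid graph: the vertices differ in exactly one
coordinate. -/
def Adj2 {n₁ n₂ : ℕ} (u v : Fin n₁ × Fin n₂) : Prop :=
  u ≠ v ∧ (u.1 = v.1 ∨ u.2 = v.2)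

/-- `v` is a sink of the induced subgrid on `N₁ × N₂`. -/
def SinkIn2 {n₁ n₂ : ℕ} (orient : Fin n₁ × Fin n₂ → Fin n₁ × Fin n₂ → Prop)
    (N₁ : Set (Fin n₁)) (N₂ : Set (Fin n₂)) (v : Fin n₁ × Fin n₂) : Prop :=
  v.1 ∈ N₁ ∧ v.2 ∈ N₂ ∧
    ∀ w : Fin n₁ × Fin n₂, w.1 ∈ N₁ → w.2 ∈ N₂ → Adj2 v w → ¬ orient v w

lemma sink_mono {n₁ n₂ : ℕ} {orient : Fin n₁ × Fin n₂ → Fin n₁ × Fin n₂ → Prop}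
    {N₁ N₁' : Set (Fin n₁)} {N₂ N₂' : Set (Fin n₂)} {v : Fin n₁ × Fin n₂}
    (h : SinkIn2 orient N₁ N₂ v) (h1 : N₁' ⊆ N₁) (h2 : N₂' ⊆ N₂)
    (hv1 : v.1 ∈ N₁') (hv2 : v.2 ∈ N₂') : SinkIn2 orient N₁' N₂' v :=
  ⟨hv1, hv2, fun w hw1 hw2 ha => h.2.2 w (h1 hw1) (h2 hw2) ha⟩

/-- A 2-dimensional grid orientation is a USO iff every induced subgrid has a sink
and every subcube has a unique sink. -/
theorem stmt9 {n₁ n₂ : ℕ} (orient : Fin n₁ × Fin n₂ → Fin n₁ × Fin n₂ → Prop)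
    (horient : ∀ u v, Adj2 u v → (orient u v ↔ ¬ orient v u)) :
    (∀ (N₁ : Set (Fin n₁)) (N₂ : Set (Fin n₂)), N₁.Nonempty → N₂.Nonempty →
        ∃! v, SinkIn2 orient N₁ N₂ v) ↔
    ((∀ (N₁ : Set (Fin n₁)) (N₂ : Set (Fin n₂)), N₁.Nonempty → N₂.Nonempty →
        ∃ v, SinkIn2 orient N₁ N₂ v) ∧
     (∀ (N₁ : Set (Fin n₁)) (N₂ : Set (Fin n₂)), N₁.Nonempty → N₂.Nonempty →
        N₁.encard ≤ 2 → N₂.encard ≤ 2 → ∃! v, SinkIn2 orient N₁ N₂ v)) := by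
  constructor
  · intro h
    exact ⟨fun N₁ N₂ h1 h2 => (h N₁ N₂ h1 h2).exists,
      fun N₁ N₂ h1 h2 _ _ => h N₁ N₂ h1 h2⟩
  · rintro ⟨hex, hcube⟩ N₁ N₂ h1 h2
    obtain ⟨v, hv⟩ := hex N₁ N₂ h1 h2
    refine ⟨v, hv, ?_⟩
    intro w hw
    have hsub1 : ({w.1, v.1} : Set (Fin n₁)) ⊆ N₁ := by
      intro x hx; rcases hx with h | h <;> subst h
      exacts [hw.1, hv.1]
    have hsub2 : ({w.2, v.2} : Set (Fin n₂)) ⊆ N₂ := by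
      intro x hx; rcases hx with h | h <;> subst h
      exacts [hw.2.1, hv.2.1]
    have hc := hcube {w.1, v.1} {w.2, v.2} ⟨v.1, by simp⟩ ⟨v.2, by simp⟩
      (le_trans (Set.encard_insert_le _ _) (by norm_num))
      (le_trans (Set.encard_insert_le _ _) (by norm_num))
    obtain ⟨u, _, huniq⟩ := hc
    have hvs := huniq v (sink_mono hv hsub1 hsub2 (by simp) (by norm_num))
    have hws := huniq w (sink_mono hw hsub1 hsub2 (by simp) (by norm_num))
    rw [hws, hvs]
end

section
/- Let (P₁, P₂) be two finite point sets in ℝ² that are well-separated (there is a line strictly separating conv(P₁) from conv(P₂)) and in weak general position (no line through one point of P₁ and one point of P₂ contains any other point of P₁ ∪ P₂). Then for every (α₁, α₂) ∈ [|P₁|] × [|P₂|] there exists exactly one oriented line ℓ passing through one point p₁ ∈ P₁ and one point p₂ ∈ P₂ (oriented from p₁ to p₂) such that exactly α₁ − 1 points of P₁ and exactly α₂ − 1 points of P₂ lie strictly to the right of ℓ. -/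
/-- The determinant of the 3×3 matrix with rows `(p₁,1), (p₂,1), (q,1)`:
`q` lies to the right of (below) the line oriented from `p₁` to `p₂` iff this is
negative, and to the left (above) iff it is positive. -/
def det3 (p₁ p₂ q : ℝ × ℝ) : ℝ :=
  (p₂.1 - p₁.1) * (q.2 - p₁.2) - (p₂.2 - p₁.2) * (q.1 - p₁.1)

open Finset
open scoped Classical


private lemma rank_lt {s : Finset (ℝ × ℝ)} {g : (ℝ × ℝ) → ℝ} {b b' : ℝ × ℝ}
    (hb : b ∈ s) (h : g b < g b') :
    (s.filter fun q => g q < g b).card < (s.filter fun q => g q < g b').card := by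
  apply Finset.card_lt_card
  constructor
  · intro q hq
    simp only [Finset.mem_filter] at *
    exact ⟨hq.1, hq.2.trans h⟩
  · intro hsub
    have := hsub (Finset.mem_filter.mpr ⟨hb, h⟩)
    simp only [Finset.mem_filter] at this
    exact absurd this.2 (lt_irrefl _)

private lemma lines_cases (m bl m' bl' c : ℝ) (h : m ≠ m' ∨ bl ≠ bl') :
    (∀ t, c < t → m' * t + bl' < m * t + bl) ∨
    (∀ t, c < t → m * t + bl < m' * t + bl') ∨
    (∀ t, t < c → m' * t + bl' < m * t + bl) ∨
    (∀ t, t < c → m * t + bl < m' * t + bl') := by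
  by_cases hm : m = m'
  · subst hm
    have hbl : bl ≠ bl' := h.resolve_left (fun hh => hh rfl)
    rcases lt_or_gt_of_ne hbl with hlt | hlt
    · exact Or.inr (Or.inl fun t _ => by linarith)
    · exact Or.inl fun t _ => by linarith
  · set z := (bl' - bl) / (m - m') with hz
    have hmm : m - m' ≠ 0 := sub_ne_zero.mpr hm
    have key : ∀ t, (m * t + bl) - (m' * t + bl') = (m - m') * (t - z) := by
      intro t
      have hz' : (m - m') * z = bl' - bl := by rw [hz]; field_simp
      linear_combination hz'
    rcases le_total z c with hzc | hzc
    · rcases lt_or_gt_of_ne hm with hlt | hlt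
      · refine Or.inr (Or.inl fun t ht => ?_)
        have := key t; nlinarith
      · refine Or.inl fun t ht => ?_
        have := key t; nlinarith
    · rcases lt_or_gt_of_ne hm with hlt | hlt
      · refine Or.inr (Or.inr (Or.inl fun t ht => ?_))
        have := key t; nlinarith
      · refine Or.inr (Or.inr (Or.inr fun t ht => ?_))
        have := key t; nlinarith


private def Dfun (X Y : ℝ × ℝ → ℝ) (p₁ p₂ q : ℝ × ℝ) : ℝ :=
  (X p₂ - X p₁) * (Y q - Y p₁) - (Y p₂ - Y p₁) * (X q - X p₁)

-- antisymmetry in last two args (same base point)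
private lemma Dfun_swap (X Y : ℝ × ℝ → ℝ) (p u v : ℝ × ℝ) :
    Dfun X Y p u v = -Dfun X Y p v u := by simp [Dfun]; ring

-- reverse base point
private lemma Dfun_rev (X Y : ℝ × ℝ → ℝ) (p₁ p₂ q : ℝ × ℝ) :
    Dfun X Y q p₂ p₁ = -Dfun X Y p₁ p₂ q := by simp [Dfun]; ring

private lemma Dfun_self_right (X Y : ℝ × ℝ → ℝ) (u v : ℝ × ℝ) :
    Dfun X Y u v v = 0 := by simp [Dfun]; ring

private lemma Dfun_self_left (X Y : ℝ × ℝ → ℝ) (u v : ℝ × ℝ) :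
    Dfun X Y u v u = 0 := by simp [Dfun]

-- slope comparison around the left point p₁ (both other points to the right of p₁)
private lemma slope2_iff (X Y : ℝ × ℝ → ℝ) {p₁ p₂ q : ℝ × ℝ}
    (hdx2 : 0 < X p₂ - X p₁) (hdxq : 0 < X q - X p₁) :
    Dfun X Y p₁ p₂ q < 0 ↔
      (Y q - Y p₁) / (X q - X p₁) < (Y p₂ - Y p₁) / (X p₂ - X p₁) := by
  rw [div_lt_div_iff₀ hdxq hdx2]
  simp only [Dfun]
  constructor <;> intro <;> nlinarith

-- slope comparison around the right point p₂ (p₁ and q to the left of p₂)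
private lemma slope1_iff (X Y : ℝ × ℝ → ℝ) {p₁ p₂ q : ℝ × ℝ}
    (hdx2 : 0 < X p₂ - X p₁) (hq : 0 < X p₂ - X q) :
    Dfun X Y p₁ p₂ q < 0 ↔
      (Y p₂ - Y p₁) / (X p₂ - X p₁) < (Y p₂ - Y q) / (X p₂ - X q) := by
  rw [div_lt_div_iff₀ hdx2 hq]
  simp only [Dfun]
  constructor <;> intro <;> nlinarith

-- line function description: below iff D < 0
private lemma below_iff (X Y : ℝ × ℝ → ℝ) {p₁ p₂ : ℝ × ℝ} (hdx : 0 < X p₂ - X p₁)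
    (r : ℝ × ℝ) :
    Dfun X Y p₁ p₂ r < 0 ↔
      Y r < ((Y p₂ - Y p₁) / (X p₂ - X p₁)) * X r
            + (Y p₁ - ((Y p₂ - Y p₁) / (X p₂ - X p₁)) * X p₁) := by
  have hne : X p₂ - X p₁ ≠ 0 := ne_of_gt hdx
  have key : Dfun X Y p₁ p₂ r = (X p₂ - X p₁) *
      (Y r - (((Y p₂ - Y p₁) / (X p₂ - X p₁)) * X r
        + (Y p₁ - ((Y p₂ - Y p₁) / (X p₂ - X p₁)) * X p₁))) := by
    simp only [Dfun]; field_simp; ring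
  rw [key]
  constructor <;> intro <;> nlinarith

private lemma online_iff (X Y : ℝ × ℝ → ℝ) {p₁ p₂ : ℝ × ℝ} (hdx : 0 < X p₂ - X p₁)
    (r : ℝ × ℝ) :
    Dfun X Y p₁ p₂ r = 0 ↔
      Y r = ((Y p₂ - Y p₁) / (X p₂ - X p₁)) * X r
            + (Y p₁ - ((Y p₂ - Y p₁) / (X p₂ - X p₁)) * X p₁) := by
  have hne : X p₂ - X p₁ ≠ 0 := ne_of_gt hdx
  have key : Dfun X Y p₁ p₂ r = (X p₂ - X p₁) *
      (Y r - (((Y p₂ - Y p₁) / (X p₂ - X p₁)) * X r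
        + (Y p₁ - ((Y p₂ - Y p₁) / (X p₂ - X p₁)) * X p₁))) := by
    simp only [Dfun]; field_simp; ring
  rw [key]
  constructor
  · intro h
    rcases mul_eq_zero.mp h with h | h
    · exact absurd h hne
    · linarith
  · intro h; rw [show Y r - _ = 0 by linarith]; ring

private lemma online_p₂ (X Y : ℝ × ℝ → ℝ) {p₁ p₂ : ℝ × ℝ} (hdx : 0 < X p₂ - X p₁) :
    Y p₂ = ((Y p₂ - Y p₁) / (X p₂ - X p₁)) * X p₂
            + (Y p₁ - ((Y p₂ - Y p₁) / (X p₂ - X p₁)) * X p₁) := by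
  exact (online_iff X Y hdx p₂).mp (Dfun_self_right X Y p₁ p₂)

private lemma online_p₁ (X Y : ℝ × ℝ → ℝ) {p₁ p₂ : ℝ × ℝ} (hdx : 0 < X p₂ - X p₁) :
    Y p₁ = ((Y p₂ - Y p₁) / (X p₂ - X p₁)) * X p₁
            + (Y p₁ - ((Y p₂ - Y p₁) / (X p₂ - X p₁)) * X p₁) := by ring

private lemma master (P₁ P₂ : Finset (ℝ × ℝ)) (X Y : ℝ × ℝ → ℝ) (c : ℝ)
    (hD : ∀ p₁ p₂ q : ℝ × ℝ, det3 p₁ p₂ q < 0 ↔ Dfun X Y p₁ p₂ q < 0)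
    (hD0 : ∀ p₁ p₂ q : ℝ × ℝ, det3 p₁ p₂ q = 0 ↔ Dfun X Y p₁ p₂ q = 0)
    (h1 : ∀ p ∈ P₁, X p < c) (h2 : ∀ q ∈ P₂, c < X q)
    (hwgp : ∀ p₁ ∈ P₁, ∀ p₂ ∈ P₂, ∀ q ∈ P₁ ∪ P₂, q ≠ p₁ → q ≠ p₂ →
      det3 p₁ p₂ q ≠ 0)
    (α₁ α₂ : ℕ) (h₁ : 1 ≤ α₁ ∧ α₁ ≤ P₁.card) (h₂ : 1 ≤ α₂ ∧ α₂ ≤ P₂.card) :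
    ∃! pq : (ℝ × ℝ) × (ℝ × ℝ), pq.1 ∈ P₁ ∧ pq.2 ∈ P₂ ∧
      {q : ℝ × ℝ | q ∈ P₁ ∧ det3 pq.1 pq.2 q < 0}.ncard = α₁ - 1 ∧
      {q : ℝ × ℝ | q ∈ P₂ ∧ det3 pq.1 pq.2 q < 0}.ncard = α₂ - 1 := by
  classical
  -- weak general position in terms of Dfun
  have hwgpD : ∀ p₁ ∈ P₁, ∀ p₂ ∈ P₂, ∀ q ∈ P₁ ∪ P₂, q ≠ p₁ → q ≠ p₂ →
      Dfun X Y p₁ p₂ q ≠ 0 := by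
    intro p₁ hp₁ p₂ hp₂ q hq h₁' h₂' h
    exact hwgp p₁ hp₁ p₂ hp₂ q hq h₁' h₂' ((hD0 p₁ p₂ q).mpr h)
  have hdx : ∀ p₁ ∈ P₁, ∀ p₂ ∈ P₂, 0 < X p₂ - X p₁ := by
    intro p₁ hp₁ p₂ hp₂; have := h1 p₁ hp₁; have := h2 p₂ hp₂; linarith
  have hne12 : ∀ p₁ ∈ P₁, ∀ p₂ ∈ P₂, p₁ ≠ p₂ := by
    intro p₁ hp₁ p₂ hp₂ h
    have := h1 p₁ hp₁; have := h2 p₂ hp₂; rw [← h] at this; linarith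
  -- counting functions
  set C₁ : (ℝ × ℝ) → (ℝ × ℝ) → ℕ :=
    fun u v => (P₁.filter fun q => Dfun X Y u v q < 0).card with hC₁
  set C₂ : (ℝ × ℝ) → (ℝ × ℝ) → ℕ :=
    fun u v => (P₂.filter fun q => Dfun X Y u v q < 0).card with hC₂
  -- ncard ↔ C
  have hncard1 : ∀ u v : ℝ × ℝ,
      {q : ℝ × ℝ | q ∈ P₁ ∧ det3 u v q < 0}.ncard = C₁ u v := by
    intro u v
    rw [show {q : ℝ × ℝ | q ∈ P₁ ∧ det3 u v q < 0}
        = ↑(P₁.filter fun q => Dfun X Y u v q < 0) by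
      ext q; simp [hD u v q]]
    exact Set.ncard_coe_finset _
  have hncard2 : ∀ u v : ℝ × ℝ,
      {q : ℝ × ℝ | q ∈ P₂ ∧ det3 u v q < 0}.ncard = C₂ u v := by
    intro u v
    rw [show {q : ℝ × ℝ | q ∈ P₂ ∧ det3 u v q < 0}
        = ↑(P₂.filter fun q => Dfun X Y u v q < 0) by
      ext q; simp [hD u v q]]
    exact Set.ncard_coe_finset _
  -- bounds
  have hbnd1 : ∀ p₁ ∈ P₁, ∀ p₂ ∈ P₂, C₁ p₁ p₂ < P₁.card := by
    intro p₁ hp₁ p₂ hp₂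
    have hsub : (P₁.filter fun q => Dfun X Y p₁ p₂ q < 0) ⊆ P₁.erase p₁ := by
      intro q hq
      simp only [Finset.mem_filter] at hq
      refine Finset.mem_erase.mpr ⟨?_, hq.1⟩
      intro h; rw [h, Dfun_self_left] at hq; exact absurd hq.2 (lt_irrefl 0)
    calc C₁ p₁ p₂ ≤ (P₁.erase p₁).card := Finset.card_le_card hsub
      _ = P₁.card - 1 := Finset.card_erase_of_mem hp₁
      _ < P₁.card := Nat.sub_lt (Finset.card_pos.mpr ⟨p₁, hp₁⟩) one_pos
  have hbnd2 : ∀ p₁ ∈ P₁, ∀ p₂ ∈ P₂, C₂ p₁ p₂ < P₂.card := by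
    intro p₁ hp₁ p₂ hp₂
    have hsub : (P₂.filter fun q => Dfun X Y p₁ p₂ q < 0) ⊆ P₂.erase p₂ := by
      intro q hq
      simp only [Finset.mem_filter] at hq
      refine Finset.mem_erase.mpr ⟨?_, hq.1⟩
      intro h; rw [h, Dfun_self_right] at hq; exact absurd hq.2 (lt_irrefl 0)
    calc C₂ p₁ p₂ ≤ (P₂.erase p₂).card := Finset.card_le_card hsub
      _ = P₂.card - 1 := Finset.card_erase_of_mem hp₂
      _ < P₂.card := Nat.sub_lt (Finset.card_pos.mpr ⟨p₂, hp₂⟩) one_pos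
  -- C₂ written via slopes around p₁
  have hC2slope : ∀ p₁ ∈ P₁, ∀ p₂ ∈ P₂,
      (P₂.filter fun q => Dfun X Y p₁ p₂ q < 0)
        = (P₂.filter fun q =>
            (Y q - Y p₁) / (X q - X p₁) < (Y p₂ - Y p₁) / (X p₂ - X p₁)) := by
    intro p₁ hp₁ p₂ hp₂
    apply Finset.filter_congr
    intro q hq
    exact slope2_iff X Y (hdx p₁ hp₁ p₂ hp₂) (hdx p₁ hp₁ q hq)
  -- C₂ strictly monotone in the slope of p₂
  have hC2lt : ∀ p₁ ∈ P₁, ∀ p₂ ∈ P₂, ∀ q₂ ∈ P₂,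
      (Y p₂ - Y p₁) / (X p₂ - X p₁) < (Y q₂ - Y p₁) / (X q₂ - X p₁) →
      C₂ p₁ p₂ < C₂ p₁ q₂ := by
    intro p₁ hp₁ p₂ hp₂ q₂ hq₂ hlt
    show (P₂.filter fun q => Dfun X Y p₁ p₂ q < 0).card
        < (P₂.filter fun q => Dfun X Y p₁ q₂ q < 0).card
    rw [hC2slope p₁ hp₁ p₂ hp₂, hC2slope p₁ hp₁ q₂ hq₂]
    exact rank_lt (g := fun q => (Y q - Y p₁) / (X q - X p₁)) hp₂ hlt
  -- slopes around p₁ are injective on P₂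
  have hslinj2 : ∀ p₁ ∈ P₁, ∀ p₂ ∈ P₂, ∀ q₂ ∈ P₂, p₂ ≠ q₂ →
      (Y p₂ - Y p₁) / (X p₂ - X p₁) ≠ (Y q₂ - Y p₁) / (X q₂ - X p₁) := by
    intro p₁ hp₁ p₂ hp₂ q₂ hq₂ hne heq
    have h1' := slope2_iff X Y (hdx p₁ hp₁ p₂ hp₂) (hdx p₁ hp₁ q₂ hq₂)
    have h2' := slope2_iff X Y (hdx p₁ hp₁ q₂ hq₂) (hdx p₁ hp₁ p₂ hp₂)
    have hD1 : ¬ Dfun X Y p₁ p₂ q₂ < 0 := fun h => by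
      rw [heq] at h1'; exact absurd (h1'.mp h) (lt_irrefl _)
    have hD2 : ¬ Dfun X Y p₁ q₂ p₂ < 0 := fun h => by
      rw [heq] at h2'; exact absurd (h2'.mp h) (lt_irrefl _)
    rw [Dfun_swap] at hD2
    have : Dfun X Y p₁ p₂ q₂ = 0 := by push_neg at hD1 hD2; linarith
    exact hwgpD p₁ hp₁ p₂ hp₂ q₂ (Finset.mem_union_right _ hq₂)
      (fun h => hne12 p₁ hp₁ q₂ hq₂ h.symm) hne.symm this
  have hC2ne : ∀ p₁ ∈ P₁, ∀ p₂ ∈ P₂, ∀ q₂ ∈ P₂, p₂ ≠ q₂ →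
      C₂ p₁ p₂ ≠ C₂ p₁ q₂ := by
    intro p₁ hp₁ p₂ hp₂ q₂ hq₂ hne
    rcases lt_trichotomy ((Y p₂ - Y p₁) / (X p₂ - X p₁))
      ((Y q₂ - Y p₁) / (X q₂ - X p₁)) with h | h | h
    · exact Nat.ne_of_lt (hC2lt p₁ hp₁ p₂ hp₂ q₂ hq₂ h)
    · exact absurd h (hslinj2 p₁ hp₁ p₂ hp₂ q₂ hq₂ hne)
    · exact (Nat.ne_of_lt (hC2lt p₁ hp₁ q₂ hq₂ p₂ hp₂ h)).symm
  -- C₁ written via (negated) slopes around p₂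
  have hC1slope : ∀ p₁ ∈ P₁, ∀ p₂ ∈ P₂,
      (P₁.filter fun q => Dfun X Y p₁ p₂ q < 0)
        = (P₁.filter fun q =>
            (-((Y p₂ - Y q) / (X p₂ - X q))) < (-((Y p₂ - Y p₁) / (X p₂ - X p₁)))) := by
    intro p₁ hp₁ p₂ hp₂
    apply Finset.filter_congr
    intro q hq
    simp only [neg_lt_neg_iff]
    exact slope1_iff X Y (hdx p₁ hp₁ p₂ hp₂) (hdx q hq p₂ hp₂)
  have hC1lt : ∀ p₁ ∈ P₁, ∀ q₁ ∈ P₁, ∀ p₂ ∈ P₂,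
      (-((Y p₂ - Y p₁) / (X p₂ - X p₁))) < (-((Y p₂ - Y q₁) / (X p₂ - X q₁))) →
      C₁ p₁ p₂ < C₁ q₁ p₂ := by
    intro p₁ hp₁ q₁ hq₁ p₂ hp₂ hlt
    show (P₁.filter fun q => Dfun X Y p₁ p₂ q < 0).card
        < (P₁.filter fun q => Dfun X Y q₁ p₂ q < 0).card
    rw [hC1slope p₁ hp₁ p₂ hp₂, hC1slope q₁ hq₁ p₂ hp₂]
    exact rank_lt (g := fun q => -((Y p₂ - Y q) / (X p₂ - X q))) hp₁ hlt
  have hslinj1 : ∀ p₁ ∈ P₁, ∀ q₁ ∈ P₁, ∀ p₂ ∈ P₂, p₁ ≠ q₁ →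
      (Y p₂ - Y p₁) / (X p₂ - X p₁) ≠ (Y p₂ - Y q₁) / (X p₂ - X q₁) := by
    intro p₁ hp₁ q₁ hq₁ p₂ hp₂ hne heq
    have h1' := slope1_iff X Y (q := q₁) (hdx p₁ hp₁ p₂ hp₂) (hdx q₁ hq₁ p₂ hp₂)
    have h2' := slope1_iff X Y (q := p₁) (hdx q₁ hq₁ p₂ hp₂) (hdx p₁ hp₁ p₂ hp₂)
    have hD1 : ¬ Dfun X Y p₁ p₂ q₁ < 0 := fun h => by
      rw [heq] at h1'; exact absurd (h1'.mp h) (lt_irrefl _)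
    have hD2 : ¬ Dfun X Y q₁ p₂ p₁ < 0 := fun h => by
      rw [← heq] at h2'; exact absurd (h2'.mp h) (lt_irrefl _)
    rw [Dfun_rev] at hD2
    have : Dfun X Y p₁ p₂ q₁ = 0 := by push_neg at hD1 hD2; linarith
    exact hwgpD p₁ hp₁ p₂ hp₂ q₁ (Finset.mem_union_left _ hq₁)
      hne.symm (hne12 q₁ hq₁ p₂ hp₂) this
  have hC1ne : ∀ p₁ ∈ P₁, ∀ q₁ ∈ P₁, ∀ p₂ ∈ P₂, p₁ ≠ q₁ →
      C₁ p₁ p₂ ≠ C₁ q₁ p₂ := by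
    intro p₁ hp₁ q₁ hq₁ p₂ hp₂ hne
    rcases lt_trichotomy (-((Y p₂ - Y p₁) / (X p₂ - X p₁)))
      (-((Y p₂ - Y q₁) / (X p₂ - X q₁))) with h | h | h
    · exact Nat.ne_of_lt (hC1lt p₁ hp₁ q₁ hq₁ p₂ hp₂ h)
    · exact absurd (neg_injective h) (hslinj1 p₁ hp₁ q₁ hq₁ p₂ hp₂ hne)
    · exact (Nat.ne_of_lt (hC1lt q₁ hq₁ p₁ hp₁ p₂ hp₂ h)).symm
  -- Case 3: all four points distinct with both counts equal is impossible
  have key2 : ∀ u₁ ∈ P₁, ∀ u₂ ∈ P₂, ∀ v₁ ∈ P₁, ∀ v₂ ∈ P₂,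
      (∀ t, c < t →
        ((Y v₂ - Y v₁)/(X v₂ - X v₁)) * t + (Y v₁ - ((Y v₂ - Y v₁)/(X v₂ - X v₁)) * X v₁)
        < ((Y u₂ - Y u₁)/(X u₂ - X u₁)) * t + (Y u₁ - ((Y u₂ - Y u₁)/(X u₂ - X u₁)) * X u₁)) →
      C₂ v₁ v₂ < C₂ u₁ u₂ := by
    intro u₁ hu₁ u₂ hu₂ v₁ hv₁ v₂ hv₂ hlt
    show (P₂.filter fun q => Dfun X Y v₁ v₂ q < 0).card
        < (P₂.filter fun q => Dfun X Y u₁ u₂ q < 0).card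
    apply Finset.card_lt_card
    constructor
    · intro q hq
      simp only [Finset.mem_filter] at hq ⊢
      refine ⟨hq.1, ?_⟩
      rw [below_iff X Y (hdx u₁ hu₁ u₂ hu₂)]
      have hq2 := (below_iff X Y (hdx v₁ hv₁ v₂ hv₂) q).mp hq.2
      have := hlt (X q) (h2 q hq.1)
      linarith
    · intro hsub
      have hv2mem : v₂ ∈ P₂.filter (fun q => Dfun X Y u₁ u₂ q < 0) := by
        simp only [Finset.mem_filter]
        refine ⟨hv₂, ?_⟩
        rw [below_iff X Y (hdx u₁ hu₁ u₂ hu₂)]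
        have hon := online_p₂ X Y (hdx v₁ hv₁ v₂ hv₂)
        have := hlt (X v₂) (h2 v₂ hv₂)
        linarith
      have := hsub hv2mem
      simp only [Finset.mem_filter, Dfun_self_right] at this
      exact absurd this.2 (lt_irrefl 0)
  have key1 : ∀ u₁ ∈ P₁, ∀ u₂ ∈ P₂, ∀ v₁ ∈ P₁, ∀ v₂ ∈ P₂,
      (∀ t, t < c →
        ((Y v₂ - Y v₁)/(X v₂ - X v₁)) * t + (Y v₁ - ((Y v₂ - Y v₁)/(X v₂ - X v₁)) * X v₁)
        < ((Y u₂ - Y u₁)/(X u₂ - X u₁)) * t + (Y u₁ - ((Y u₂ - Y u₁)/(X u₂ - X u₁)) * X u₁)) →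
      C₁ v₁ v₂ < C₁ u₁ u₂ := by
    intro u₁ hu₁ u₂ hu₂ v₁ hv₁ v₂ hv₂ hlt
    show (P₁.filter fun q => Dfun X Y v₁ v₂ q < 0).card
        < (P₁.filter fun q => Dfun X Y u₁ u₂ q < 0).card
    apply Finset.card_lt_card
    constructor
    · intro q hq
      simp only [Finset.mem_filter] at hq ⊢
      refine ⟨hq.1, ?_⟩
      rw [below_iff X Y (hdx u₁ hu₁ u₂ hu₂)]
      have hq2 := (below_iff X Y (hdx v₁ hv₁ v₂ hv₂) q).mp hq.2
      have := hlt (X q) (h1 q hq.1)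
      linarith
    · intro hsub
      have hv1mem : v₁ ∈ P₁.filter (fun q => Dfun X Y u₁ u₂ q < 0) := by
        simp only [Finset.mem_filter]
        refine ⟨hv₁, ?_⟩
        rw [below_iff X Y (hdx u₁ hu₁ u₂ hu₂)]
        have hon := online_p₁ X Y (hdx v₁ hv₁ v₂ hv₂)
        have := hlt (X v₁) (h1 v₁ hv₁)
        linarith
      have := hsub hv1mem
      simp only [Finset.mem_filter, Dfun_self_left] at this
      exact absurd this.2 (lt_irrefl 0)
  have hcase3 : ∀ p₁ ∈ P₁, ∀ q₁ ∈ P₁, ∀ p₂ ∈ P₂, ∀ q₂ ∈ P₂, p₁ ≠ q₁ → p₂ ≠ q₂ →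
      C₁ p₁ p₂ = C₁ q₁ q₂ → C₂ p₁ p₂ = C₂ q₁ q₂ → False := by
    intro p₁ hp₁ q₁ hq₁ p₂ hp₂ q₂ hq₂ hne1 hne2 hc1 hc2
    have hlines : ((Y p₂ - Y p₁)/(X p₂ - X p₁)) ≠ ((Y q₂ - Y q₁)/(X q₂ - X q₁)) ∨
        (Y p₁ - ((Y p₂ - Y p₁)/(X p₂ - X p₁)) * X p₁)
          ≠ (Y q₁ - ((Y q₂ - Y q₁)/(X q₂ - X q₁)) * X q₁) := by
      by_contra h
      push_neg at h
      obtain ⟨hm, hb⟩ := h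
      have honq1 : Dfun X Y p₁ p₂ q₁ = 0 := by
        rw [online_iff X Y (hdx p₁ hp₁ p₂ hp₂), hm]
        rw [hm] at hb
        linarith [hb]
      exact hwgpD p₁ hp₁ p₂ hp₂ q₁ (Finset.mem_union_left _ hq₁)
        hne1.symm (hne12 q₁ hq₁ p₂ hp₂) honq1
    rcases lines_cases _ _ _ _ c hlines with hbr | hbr | hbr | hbr
    · exact (Nat.ne_of_lt (key2 p₁ hp₁ p₂ hp₂ q₁ hq₁ q₂ hq₂ hbr)) hc2.symm
    · exact (Nat.ne_of_lt (key2 q₁ hq₁ q₂ hq₂ p₁ hp₁ p₂ hp₂ hbr)) hc2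
    · exact (Nat.ne_of_lt (key1 p₁ hp₁ p₂ hp₂ q₁ hq₁ q₂ hq₂ hbr)) hc1.symm
    · exact (Nat.ne_of_lt (key1 q₁ hq₁ q₂ hq₂ p₁ hp₁ p₂ hp₂ hbr)) hc1
  -- assemble
  obtain ⟨hα₁l, hα₁u⟩ := h₁
  obtain ⟨hα₂l, hα₂u⟩ := h₂
  set F : (ℝ × ℝ) × (ℝ × ℝ) → ℕ × ℕ := fun pq => (C₁ pq.1 pq.2, C₂ pq.1 pq.2) with hF
  have hinj : Set.InjOn F ↑(P₁ ×ˢ P₂) := by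
    intro x hx y hy hxy
    rw [Finset.mem_coe, Finset.mem_product] at hx hy
    have hF1 : C₁ x.1 x.2 = C₁ y.1 y.2 := congrArg Prod.fst hxy
    have hF2 : C₂ x.1 x.2 = C₂ y.1 y.2 := congrArg Prod.snd hxy
    by_cases h11 : x.1 = y.1
    · by_cases h22 : x.2 = y.2
      · exact Prod.ext h11 h22
      · exfalso
        rw [h11] at hF2
        exact hC2ne y.1 hy.1 x.2 hx.2 y.2 hy.2 h22 hF2
    · by_cases h22 : x.2 = y.2
      · exfalso
        rw [h22] at hF1
        exact hC1ne x.1 hx.1 y.1 hy.1 y.2 hy.2 h11 hF1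
      · exact absurd hF2 (fun hF2' =>
          hcase3 x.1 hx.1 y.1 hy.1 x.2 hx.2 y.2 hy.2 h11 h22 hF1 hF2')
  have hmaps : ∀ pq ∈ P₁ ×ˢ P₂,
      F pq ∈ Finset.range P₁.card ×ˢ Finset.range P₂.card := by
    intro pq hpq
    rw [Finset.mem_product] at hpq
    rw [Finset.mem_product]
    exact ⟨Finset.mem_range.mpr (hbnd1 pq.1 hpq.1 pq.2 hpq.2),
      Finset.mem_range.mpr (hbnd2 pq.1 hpq.1 pq.2 hpq.2)⟩
  have hcard : (Finset.range P₁.card ×ˢ Finset.range P₂.card).card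
      ≤ ((P₁ ×ˢ P₂).image F).card := by
    rw [Finset.card_image_of_injOn hinj, Finset.card_product, Finset.card_product,
      Finset.card_range, Finset.card_range]
  have himg : (P₁ ×ˢ P₂).image F = Finset.range P₁.card ×ˢ Finset.range P₂.card :=
    Finset.eq_of_subset_of_card_le
      (fun z hz => by
        obtain ⟨pq, hpq, rfl⟩ := Finset.mem_image.mp hz
        exact hmaps pq hpq) hcard
  have hmem : ((α₁ - 1 : ℕ), (α₂ - 1 : ℕ))
      ∈ Finset.range P₁.card ×ˢ Finset.range P₂.card := by
    rw [Finset.mem_product]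
    exact ⟨Finset.mem_range.mpr (by omega), Finset.mem_range.mpr (by omega)⟩
  rw [← himg] at hmem
  obtain ⟨pq, hpq, hFpq⟩ := Finset.mem_image.mp hmem
  have hpq' := Finset.mem_product.mp hpq
  have hFpq1 : C₁ pq.1 pq.2 = α₁ - 1 := congrArg Prod.fst hFpq
  have hFpq2 : C₂ pq.1 pq.2 = α₂ - 1 := congrArg Prod.snd hFpq
  refine ⟨pq, ⟨hpq'.1, hpq'.2, by rw [hncard1]; exact hFpq1,
    by rw [hncard2]; exact hFpq2⟩, ?_⟩
  rintro pq' ⟨h1', h2', h3', h4'⟩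
  apply hinj (by rw [Finset.mem_coe, Finset.mem_product]; exact ⟨h1', h2'⟩)
    (Finset.mem_coe.mpr hpq)
  have e1 : C₁ pq'.1 pq'.2 = α₁ - 1 := by rw [← hncard1]; exact h3'
  have e2 : C₂ pq'.1 pq'.2 = α₂ - 1 := by rw [← hncard2]; exact h4'
  show (C₁ pq'.1 pq'.2, C₂ pq'.1 pq'.2) = (C₁ pq.1 pq.2, C₂ pq.1 pq.2)
  rw [e1, e2, hFpq1, hFpq2]

/-- Planar α-Ham-Sandwich: for two well-separated finite planar point sets in weak
general position, for every valid `(α₁, α₂)` there is exactly one oriented line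
through a point of each set with exactly `αᵢ − 1` points of `Pᵢ` strictly to its
right. -/
theorem stmt14 (P₁ P₂ : Finset (ℝ × ℝ))
    (hsep : ∃ a bb c : ℝ, (a, bb) ≠ ((0 : ℝ), (0 : ℝ)) ∧
      (∀ p ∈ P₁, a * p.1 + bb * p.2 < c) ∧ (∀ q ∈ P₂, c < a * q.1 + bb * q.2))
    (hwgp : ∀ p₁ ∈ P₁, ∀ p₂ ∈ P₂, ∀ q ∈ P₁ ∪ P₂, q ≠ p₁ → q ≠ p₂ →
      det3 p₁ p₂ q ≠ 0)
    (α₁ α₂ : ℕ) (h₁ : 1 ≤ α₁ ∧ α₁ ≤ P₁.card) (h₂ : 1 ≤ α₂ ∧ α₂ ≤ P₂.card) :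
    ∃! pq : (ℝ × ℝ) × (ℝ × ℝ), pq.1 ∈ P₁ ∧ pq.2 ∈ P₂ ∧
      {q : ℝ × ℝ | q ∈ P₁ ∧ det3 pq.1 pq.2 q < 0}.ncard = α₁ - 1 ∧
      {q : ℝ × ℝ | q ∈ P₂ ∧ det3 pq.1 pq.2 q < 0}.ncard = α₂ - 1 := by
  obtain ⟨a, bb, c, hab, hP1, hP2⟩ := hsep
  have hor : a ≠ 0 ∨ bb ≠ 0 := by
    by_contra h
    push_neg at h
    exact hab (by rw [h.1, h.2])
  have hk : 0 < a ^ 2 + bb ^ 2 := by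
    rcases hor with h | h
    · have := mul_self_pos.mpr h; nlinarith
    · have := mul_self_pos.mpr h; nlinarith
  set X : ℝ × ℝ → ℝ := fun p => a * p.1 + bb * p.2 with hX
  set Y : ℝ × ℝ → ℝ := fun p => -bb * p.1 + a * p.2 with hY
  have hid : ∀ p₁ p₂ q : ℝ × ℝ, Dfun X Y p₁ p₂ q = (a ^ 2 + bb ^ 2) * det3 p₁ p₂ q := by
    intro p₁ p₂ q
    simp only [Dfun, hX, hY, det3]
    ring
  have hD : ∀ p₁ p₂ q : ℝ × ℝ, det3 p₁ p₂ q < 0 ↔ Dfun X Y p₁ p₂ q < 0 := by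
    intro p₁ p₂ q
    rw [hid]
    constructor <;> intro <;> nlinarith
  have hD0 : ∀ p₁ p₂ q : ℝ × ℝ, det3 p₁ p₂ q = 0 ↔ Dfun X Y p₁ p₂ q = 0 := by
    intro p₁ p₂ q
    rw [hid]
    constructor
    · intro h; rw [h]; ring
    · intro h
      rcases mul_eq_zero.mp h with h | h
      · exact absurd h (ne_of_gt hk)
      · exact h
  exact master P₁ P₂ X Y c hD hD0 hP1 hP2 hwgp α₁ α₂ h₁ h₂
end
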